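/- For every ν ∈ (-1, 1), the complex-valued function U_ν(Z) = √(1-ν²)[√(1-ν) cosh(√(1-ν²) Z) - i√(1+ν) sinh(√(1-ν²) Z)] / (√2 [cosh(2√(1-ν²) Z) - ν]) satisfies the ODE i U_ν'(Z) + ν U_ν(Z) + conj(U_ν(Z)) - 4 |U_ν(Z)|² U_ν(Z) = 0 for all Z ∈ ℝ. -/

import Mathlib

open Real Complex

/-- The explicit 1D gap-soliton family `Uν` of the reduced semi-Dirac equation. -/
noncomputable def solitonU (ν Z : ℝ) : ℂ :=
  (Real.sqrt (1 - ν^2) *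
      ((Real.sqrt (1 - ν) * Real.cosh (Real.sqrt (1 - ν^2) * Z) : ℝ)
        - Complex.I * (Real.sqrt (1 + ν) * Real.sinh (Real.sqrt (1 - ν^2) * Z) : ℝ))) /
    ((Real.sqrt 2 * (Real.cosh (2 * Real.sqrt (1 - ν^2) * Z) - ν) : ℝ))

set_option maxHeartbeats 1600000 in
/-- For every ν ∈ (-1,1), `Uν` satisfies i U' + ν U + conj U - 4|U|²U = 0. -/
theorem solitonU_solves_ode (ν : ℝ) (hν : ν ∈ Set.Ioo (-1 : ℝ) 1) (Z : ℝ) :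
    Complex.I * deriv (solitonU ν) Z + (ν : ℂ) * solitonU ν Z
      + (starRingEnd ℂ) (solitonU ν Z)
      - 4 * (‖solitonU ν Z‖^2 : ℝ) * solitonU ν Z = 0 := by
  obtain ⟨hν1, hν2⟩ := hν
  set s := Real.sqrt (1 - ν^2) with hs_def
  set a := Real.sqrt (1 - ν) with ha_def
  set b := Real.sqrt (1 + ν) with hb_def
  have ha2 : a^2 = 1 - ν := Real.sq_sqrt (by linarith)
  have hb2 : b^2 = 1 + ν := Real.sq_sqrt (by linarith)
  have hsab : s = a * b := by
    rw [hs_def, ha_def, hb_def, ← Real.sqrt_mul (by linarith)]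
    ring_nf
  set c := Real.cosh (s*Z) with hc_def
  set sh := Real.sinh (s*Z) with hsh_def
  have hch2 : Real.cosh (2*s*Z) = c^2 + sh^2 := by
    rw [show 2*s*Z = 2*(s*Z) by ring, Real.cosh_two_mul]
  have hsh2 : Real.sinh (2*s*Z) = 2*sh*c := by
    rw [show 2*s*Z = 2*(s*Z) by ring, Real.sinh_two_mul]
  have hcs : c^2 = sh^2 + 1 := Real.cosh_sq _
  have hd0 : (0:ℝ) < Real.cosh (2*s*Z) - ν := by
    have := Real.one_le_cosh (2*s*Z); linarith
  have hr2 : Real.sqrt 2 ^ 2 = 2 := Real.sq_sqrt (by norm_num)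
  have hr2pos : (0:ℝ) < Real.sqrt 2 := Real.sqrt_pos.2 (by norm_num)
  have hDpos : (0:ℝ) < Real.sqrt 2 * (Real.cosh (2*s*Z) - ν) := by positivity
  have hDne : ((Real.sqrt 2 * (Real.cosh (2*s*Z) - ν) : ℝ) : ℂ) ≠ 0 := by
    exact_mod_cast hDpos.ne'
  -- derivatives
  have hlin : HasDerivAt (fun z : ℝ => s*z) s Z := by
    simpa using (hasDerivAt_id Z).const_mul s
  have hlin2 : HasDerivAt (fun z : ℝ => 2*s*z) (2*s) Z := by
    simpa using (hasDerivAt_id Z).const_mul (2*s)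
  have h1 : HasDerivAt (fun z : ℝ => a * Real.cosh (s*z)) (a * (sh * s)) Z :=
    hlin.cosh.const_mul a
  have h2 : HasDerivAt (fun z : ℝ => b * Real.sinh (s*z)) (b * (c * s)) Z :=
    hlin.sinh.const_mul b
  have hnum : HasDerivAt
      (fun z : ℝ => (s : ℂ) * ((a * Real.cosh (s*z) : ℝ) - Complex.I * (b * Real.sinh (s*z) : ℝ)))
      ((s:ℂ) * ((a * (sh*s) : ℝ) - Complex.I * (b * (c*s) : ℝ))) Z :=
    ((h1.ofReal_comp).sub ((h2.ofReal_comp).const_mul Complex.I)).const_mul _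
  have hden : HasDerivAt
      (fun z : ℝ => ((Real.sqrt 2 * (Real.cosh (2*s*z) - ν) : ℝ) : ℂ))
      ((Real.sqrt 2 * (Real.sinh (2*s*Z) * (2*s)) : ℝ) : ℂ) Z :=
    (((hlin2.cosh).sub_const ν).const_mul (Real.sqrt 2)).ofReal_comp
  have hfun : solitonU ν = fun z : ℝ =>
      ((s : ℂ) * ((a * Real.cosh (s*z) : ℝ) - Complex.I * (b * Real.sinh (s*z) : ℝ))) /
        ((Real.sqrt 2 * (Real.cosh (2*s*z) - ν) : ℝ) : ℂ) := by
    funext z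
    simp only [solitonU, hs_def, ha_def, hb_def]
  have hderiv : deriv (solitonU ν) Z =
      (((s:ℂ) * ((a * (sh*s) : ℝ) - Complex.I * (b * (c*s) : ℝ))) * ((Real.sqrt 2 * (Real.cosh (2*s*Z) - ν) : ℝ):ℂ)
        - ((s : ℂ) * ((a * c : ℝ) - Complex.I * (b * sh : ℝ))) * ((Real.sqrt 2 * (Real.sinh (2*s*Z) * (2*s)) : ℝ):ℂ))
      / (((Real.sqrt 2 * (Real.cosh (2*s*Z) - ν) : ℝ):ℂ))^2 := by
    rw [hfun]
    exact (hnum.div hden hDne).deriv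
  have hUval : solitonU ν Z =
      ((s : ℂ) * ((a * c : ℝ) - Complex.I * (b * sh : ℝ))) /
        ((Real.sqrt 2 * (Real.cosh (2*s*Z) - ν) : ℝ) : ℂ) := by
    rw [hfun]
  have hnorm : (‖solitonU ν Z‖:ℝ)^2 =
      (s^2 * ((a*c)^2 + (b*sh)^2)) / (Real.sqrt 2 * (Real.cosh (2*s*Z) - ν))^2 := by
    rw [hUval, Complex.sq_norm]
    rw [map_div₀ Complex.normSq, map_mul]
    have h9 : ((a*c : ℝ) - Complex.I * (b*sh : ℝ) : ℂ) = ((a*c : ℝ):ℂ) + ((-(b*sh) : ℝ):ℂ) * Complex.I := by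
      push_cast; ring
    rw [h9, Complex.normSq_add_mul_I, Complex.normSq_ofReal, Complex.normSq_ofReal]
    ring
  rw [hderiv, hnorm, hUval]
  rw [hch2, hsh2]
  have hsabc : (s:ℂ) = (a:ℂ)*(b:ℂ) := by exact_mod_cast hsab
  have ha2c : (a:ℂ)^2 = 1 - (ν:ℂ) := by exact_mod_cast ha2
  have hb2c : (b:ℂ)^2 = 1 + (ν:ℂ) := by exact_mod_cast hb2
  have hcsc : (c:ℂ)^2 = (sh:ℂ)^2 + 1 := by exact_mod_cast hcs
  have hr2c : ((Real.sqrt 2:ℝ):ℂ)^2 = 2 := by exact_mod_cast hr2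
  have hi2 : Complex.I^2 = -1 := Complex.I_sq
  have hW : ((Real.sqrt 2 : ℝ) : ℂ) ≠ 0 := by exact_mod_cast hr2pos.ne'
  have hE : ((c:ℂ)^2 + (sh:ℂ)^2 - (ν:ℂ)) ≠ 0 := by
    have h0 : (0:ℝ) < c^2 + sh^2 - ν := by nlinarith [sq_nonneg sh, Real.one_le_cosh (s*Z), hcs]
    have : ((c^2 + sh^2 - ν : ℝ) : ℂ) ≠ 0 := by exact_mod_cast h0.ne'
    push_cast at this
    convert this using 2
  have key : Complex.I * (((s:ℂ)*((a:ℂ)*((sh:ℂ)*(s:ℂ)) - Complex.I*((b:ℂ)*((c:ℂ)*(s:ℂ)))))*(((Real.sqrt 2:ℝ):ℂ)*((c:ℂ)^2+(sh:ℂ)^2-(ν:ℂ))) - ((s:ℂ)*((a:ℂ)*(c:ℂ) - Complex.I*((b:ℂ)*(sh:ℂ))))*(((Real.sqrt 2:ℝ):ℂ)*(2*(sh:ℂ)*(c:ℂ)*(2*(s:ℂ)))))*(((Real.sqrt 2:ℝ):ℂ)*((c:ℂ)^2+(sh:ℂ)^2-(ν:ℂ))) + ((ν:ℂ)*((s:ℂ)*((a:ℂ)*(c:ℂ)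 - Complex.I*((b:ℂ)*(sh:ℂ)))) + ((s:ℂ)*((a:ℂ)*(c:ℂ) + Complex.I*((b:ℂ)*(sh:ℂ)))))*(((Real.sqrt 2:ℝ):ℂ)*((c:ℂ)^2+(sh:ℂ)^2-(ν:ℂ)))^2 - 4*((s:ℂ)^2*((a:ℂ)^2*(c:ℂ)^2+(b:ℂ)^2*(sh:ℂ)^2))*((s:ℂ)*((a:ℂ)*(c:ℂ) - Complex.I*((b:ℂ)*(sh:ℂ)))) = 0 := by
    linear_combination ((b:ℂ)*(sh:ℂ)*(ν:ℂ)^2*((Real.sqrt 2:ℝ):ℂ)^2*Complex.I + (-1)*(b:ℂ)*(sh:ℂ)*(ν:ℂ)^3*((Real.sqrt 2:ℝ):ℂ)^2*Complex.I + (-2)*(b:ℂ)*(sh:ℂ)^3*(ν:ℂ)*((Real.sqrt 2:ℝ):ℂ)^2*Complex.I + (2)*(b:ℂ)*(sh:ℂ)^3*(ν:ℂ)^2*((Real.sqrt 2:ℝ):ℂ)^2*Complex.I + (b:ℂ)*(sh:ℂ)^5*((Real.sqrt 2:ℝ):ℂ)^2*Complex.I + (-1)*(b:ℂ)*(sh:ℂ)^5*(ν:ℂ)*((Real.sqrt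 2:ℝ):ℂ)^2*Complex.I + (-2)*(b:ℂ)*(c:ℂ)^2*(sh:ℂ)*(ν:ℂ)*((Real.sqrt 2:ℝ):ℂ)^2*Complex.I + (2)*(b:ℂ)*(c:ℂ)^2*(sh:ℂ)*(ν:ℂ)^2*((Real.sqrt 2:ℝ):ℂ)^2*Complex.I + (2)*(b:ℂ)*(c:ℂ)^2*(sh:ℂ)^3*((Real.sqrt 2:ℝ):ℂ)^2*Complex.I + (-2)*(b:ℂ)*(c:ℂ)^2*(sh:ℂ)^3*(ν:ℂ)*((Real.sqrt 2:ℝ):ℂ)^2*Complex.I + (b:ℂ)*(c:ℂ)^4*(sh:ℂ)*((Real.sqrt 2:ℝ):ℂ)^2*Complex.I + (-1)*(b:ℂ)*(c:ℂ)^4*(sh:ℂ)*(ν:ℂ)*((Real.sqrt 2:ℝ):ℂ)^2*Complex.I + (a:ℂ)*(c:ℂ)*(ν:ℂ)^2*((Real.sqrt 2:ℝ):ℂ)^2 + (a:ℂ)*(c:ℂ)*(ν:ℂ)^3*((Real.sqrt 2:ℝ):ℂ)^2 + (-2)*(a:ℂ)*(c:ℂ)*(sh:ℂ)^2*(ν:ℂ)*((Real.sqrt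 2:ℝ):ℂ)^2 + (-2)*(a:ℂ)*(c:ℂ)*(sh:ℂ)^2*(ν:ℂ)^2*((Real.sqrt 2:ℝ):ℂ)^2 + (a:ℂ)*(c:ℂ)*(sh:ℂ)^4*((Real.sqrt 2:ℝ):ℂ)^2 + (a:ℂ)*(c:ℂ)*(sh:ℂ)^4*(ν:ℂ)*((Real.sqrt 2:ℝ):ℂ)^2 + (-2)*(a:ℂ)*(c:ℂ)^3*(ν:ℂ)*((Real.sqrt 2:ℝ):ℂ)^2 + (-2)*(a:ℂ)*(c:ℂ)^3*(ν:ℂ)^2*((Real.sqrt 2:ℝ):ℂ)^2 + (2)*(a:ℂ)*(c:ℂ)^3*(sh:ℂ)^2*((Real.sqrt 2:ℝ):ℂ)^2 + (2)*(a:ℂ)*(c:ℂ)^3*(sh:ℂ)^2*(ν:ℂ)*((Real.sqrt 2:ℝ):ℂ)^2 + (a:ℂ)*(c:ℂ)^5*((Real.sqrt 2:ℝ):ℂ)^2 + (a:ℂ)*(c:ℂ)^5*(ν:ℂ)*((Real.sqrt 2:ℝ):ℂ)^2 + (-1)*(a:ℂ)*(b:ℂ)^2*(c:ℂ)*(ν:ℂ)^2*((Real.sqrt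 2:ℝ):ℂ)^2*Complex.I^2 + (-2)*(a:ℂ)*(b:ℂ)^2*(c:ℂ)*(sh:ℂ)^2*(ν:ℂ)*((Real.sqrt 2:ℝ):ℂ)^2*Complex.I^2 + (3)*(a:ℂ)*(b:ℂ)^2*(c:ℂ)*(sh:ℂ)^4*((Real.sqrt 2:ℝ):ℂ)^2*Complex.I^2 + (2)*(a:ℂ)*(b:ℂ)^2*(c:ℂ)^3*(ν:ℂ)*((Real.sqrt 2:ℝ):ℂ)^2*Complex.I^2 + (2)*(a:ℂ)*(b:ℂ)^2*(c:ℂ)^3*(sh:ℂ)^2*((Real.sqrt 2:ℝ):ℂ)^2*Complex.I^2 + (-1)*(a:ℂ)*(b:ℂ)^2*(c:ℂ)^5*((Real.sqrt 2:ℝ):ℂ)^2*Complex.I^2 + (a:ℂ)^2*(b:ℂ)*(sh:ℂ)*(ν:ℂ)^2*((Real.sqrt 2:ℝ):ℂ)^2*Complex.I + (-2)*(a:ℂ)^2*(b:ℂ)*(sh:ℂ)^3*(ν:ℂ)*((Real.sqrt 2:ℝ):ℂ)^2*Complex.I + (a:ℂ)^2*(b:ℂ)*(sh:ℂ)^5*((Real.sqrt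 2:ℝ):ℂ)^2*Complex.I + (2)*(a:ℂ)^2*(b:ℂ)*(c:ℂ)^2*(sh:ℂ)*(ν:ℂ)*((Real.sqrt 2:ℝ):ℂ)^2*Complex.I + (-2)*(a:ℂ)^2*(b:ℂ)*(c:ℂ)^2*(sh:ℂ)^3*((Real.sqrt 2:ℝ):ℂ)^2*Complex.I + (-3)*(a:ℂ)^2*(b:ℂ)*(c:ℂ)^4*(sh:ℂ)*((Real.sqrt 2:ℝ):ℂ)^2*Complex.I + (4)*(a:ℂ)^2*(b:ℂ)^5*(sh:ℂ)^3*Complex.I + (-4)*(a:ℂ)^3*(b:ℂ)^4*(c:ℂ)*(sh:ℂ)^2 + (4)*(a:ℂ)^4*(b:ℂ)^3*(c:ℂ)^2*(sh:ℂ)*Complex.I + (-4)*(a:ℂ)^5*(b:ℂ)^2*(c:ℂ)^3 + (-1)*(s:ℂ)*(b:ℂ)*(c:ℂ)*(ν:ℂ)^2*((Real.sqrt 2:ℝ):ℂ)^2*Complex.I^2 + (-2)*(s:ℂ)*(b:ℂ)*(c:ℂ)*(sh:ℂ)^2*(ν:ℂ)*((Real.sqrt 2:ℝ):ℂ)^2*Complex.I^2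 + (3)*(s:ℂ)*(b:ℂ)*(c:ℂ)*(sh:ℂ)^4*((Real.sqrt 2:ℝ):ℂ)^2*Complex.I^2 + (2)*(s:ℂ)*(b:ℂ)*(c:ℂ)^3*(ν:ℂ)*((Real.sqrt 2:ℝ):ℂ)^2*Complex.I^2 + (2)*(s:ℂ)*(b:ℂ)*(c:ℂ)^3*(sh:ℂ)^2*((Real.sqrt 2:ℝ):ℂ)^2*Complex.I^2 + (-1)*(s:ℂ)*(b:ℂ)*(c:ℂ)^5*((Real.sqrt 2:ℝ):ℂ)^2*Complex.I^2 + (s:ℂ)*(a:ℂ)*(sh:ℂ)*(ν:ℂ)^2*((Real.sqrt 2:ℝ):ℂ)^2*Complex.I + (-2)*(s:ℂ)*(a:ℂ)*(sh:ℂ)^3*(ν:ℂ)*((Real.sqrt 2:ℝ):ℂ)^2*Complex.I + (s:ℂ)*(a:ℂ)*(sh:ℂ)^5*((Real.sqrt 2:ℝ):ℂ)^2*Complex.I + (2)*(s:ℂ)*(a:ℂ)*(c:ℂ)^2*(sh:ℂ)*(ν:ℂ)*((Real.sqrt 2:ℝ):ℂ)^2*Complex.I + (-2)*(s:ℂ)*(a:ℂ)*(c:ℂ)^2*(sh:ℂ)^3*((Real.sqrt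 2:ℝ):ℂ)^2*Complex.I + (-3)*(s:ℂ)*(a:ℂ)*(c:ℂ)^4*(sh:ℂ)*((Real.sqrt 2:ℝ):ℂ)^2*Complex.I + (4)*(s:ℂ)*(a:ℂ)*(b:ℂ)^4*(sh:ℂ)^3*Complex.I + (-4)*(s:ℂ)*(a:ℂ)^2*(b:ℂ)^3*(c:ℂ)*(sh:ℂ)^2 + (4)*(s:ℂ)*(a:ℂ)^3*(b:ℂ)^2*(c:ℂ)^2*(sh:ℂ)*Complex.I + (-4)*(s:ℂ)*(a:ℂ)^4*(b:ℂ)*(c:ℂ)^3 + (4)*(s:ℂ)^2*(b:ℂ)^3*(sh:ℂ)^3*Complex.I + (-4)*(s:ℂ)^2*(a:ℂ)*(b:ℂ)^2*(c:ℂ)*(sh:ℂ)^2 + (4)*(s:ℂ)^2*(a:ℂ)^2*(b:ℂ)*(c:ℂ)^2*(sh:ℂ)*Complex.I + (-4)*(s:ℂ)^2*(a:ℂ)^3*(c:ℂ)^3) * hsabc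
      + ((b:ℂ)*(c:ℂ)*(ν:ℂ)^2*((Real.sqrt 2:ℝ):ℂ)^2 + (b:ℂ)*(c:ℂ)*(ν:ℂ)^3*((Real.sqrt 2:ℝ):ℂ)^2 + (-2)*(b:ℂ)*(c:ℂ)*(sh:ℂ)^2*(ν:ℂ)*((Real.sqrt 2:ℝ):ℂ)^2 + (-2)*(b:ℂ)*(c:ℂ)*(sh:ℂ)^2*(ν:ℂ)^2*((Real.sqrt 2:ℝ):ℂ)^2 + (b:ℂ)*(c:ℂ)*(sh:ℂ)^4*((Real.sqrt 2:ℝ):ℂ)^2 + (b:ℂ)*(c:ℂ)*(sh:ℂ)^4*(ν:ℂ)*((Real.sqrt 2:ℝ):ℂ)^2 + (-2)*(b:ℂ)*(c:ℂ)^3*(ν:ℂ)*((Real.sqrt 2:ℝ):ℂ)^2 + (-2)*(b:ℂ)*(c:ℂ)^3*(ν:ℂ)^2*((Real.sqrt 2:ℝ):ℂ)^2 + (2)*(b:ℂ)*(c:ℂ)^3*(sh:ℂ)^2*((Real.sqrt 2:ℝ):ℂ)^2 + (2)*(b:ℂ)*(c:ℂ)^3*(sh:ℂ)^2*(ν:ℂ)*((Real.sqrt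 2:ℝ):ℂ)^2 + (b:ℂ)*(c:ℂ)^5*((Real.sqrt 2:ℝ):ℂ)^2 + (b:ℂ)*(c:ℂ)^5*(ν:ℂ)*((Real.sqrt 2:ℝ):ℂ)^2 + (-1)*(b:ℂ)^3*(c:ℂ)*(ν:ℂ)^2*((Real.sqrt 2:ℝ):ℂ)^2*Complex.I^2 + (-2)*(b:ℂ)^3*(c:ℂ)*(sh:ℂ)^2*(ν:ℂ)*((Real.sqrt 2:ℝ):ℂ)^2*Complex.I^2 + (3)*(b:ℂ)^3*(c:ℂ)*(sh:ℂ)^4*((Real.sqrt 2:ℝ):ℂ)^2*Complex.I^2 + (-4)*(b:ℂ)^3*(c:ℂ)^3 + (8)*(b:ℂ)^3*(c:ℂ)^3*(ν:ℂ) + (2)*(b:ℂ)^3*(c:ℂ)^3*(ν:ℂ)*((Real.sqrt 2:ℝ):ℂ)^2*Complex.I^2 + (-4)*(b:ℂ)^3*(c:ℂ)^3*(ν:ℂ)^2 + (2)*(b:ℂ)^3*(c:ℂ)^3*(sh:ℂ)^2*((Real.sqrt 2:ℝ):ℂ)^2*Complex.I^2 + (-1)*(b:ℂ)^3*(c:ℂ)^5*((Real.sqrt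 2:ℝ):ℂ)^2*Complex.I^2 + (-4)*(b:ℂ)^5*(c:ℂ)*(sh:ℂ)^2 + (4)*(b:ℂ)^5*(c:ℂ)*(sh:ℂ)^2*(ν:ℂ) + (a:ℂ)*(b:ℂ)^2*(sh:ℂ)*(ν:ℂ)^2*((Real.sqrt 2:ℝ):ℂ)^2*Complex.I + (-2)*(a:ℂ)*(b:ℂ)^2*(sh:ℂ)^3*(ν:ℂ)*((Real.sqrt 2:ℝ):ℂ)^2*Complex.I + (a:ℂ)*(b:ℂ)^2*(sh:ℂ)^5*((Real.sqrt 2:ℝ):ℂ)^2*Complex.I + (2)*(a:ℂ)*(b:ℂ)^2*(c:ℂ)^2*(sh:ℂ)*(ν:ℂ)*((Real.sqrt 2:ℝ):ℂ)^2*Complex.I + (-2)*(a:ℂ)*(b:ℂ)^2*(c:ℂ)^2*(sh:ℂ)^3*((Real.sqrt 2:ℝ):ℂ)^2*Complex.I + (-3)*(a:ℂ)*(b:ℂ)^2*(c:ℂ)^4*(sh:ℂ)*((Real.sqrt 2:ℝ):ℂ)^2*Complex.I + (4)*(a:ℂ)*(b:ℂ)^4*(c:ℂ)^2*(sh:ℂ)*Complex.I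 + (-4)*(a:ℂ)*(b:ℂ)^4*(c:ℂ)^2*(sh:ℂ)*(ν:ℂ)*Complex.I + (4)*(a:ℂ)*(b:ℂ)^6*(sh:ℂ)^3*Complex.I + (-4)*(a:ℂ)^2*(b:ℂ)^3*(c:ℂ)^3 + (4)*(a:ℂ)^2*(b:ℂ)^3*(c:ℂ)^3*(ν:ℂ) + (-4)*(a:ℂ)^2*(b:ℂ)^5*(c:ℂ)*(sh:ℂ)^2 + (4)*(a:ℂ)^3*(b:ℂ)^4*(c:ℂ)^2*(sh:ℂ)*Complex.I + (-4)*(a:ℂ)^4*(b:ℂ)^3*(c:ℂ)^3) * ha2c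
      + ((-1)*(b:ℂ)*(c:ℂ)*(ν:ℂ)^2*((Real.sqrt 2:ℝ):ℂ)^2*Complex.I^2 + (b:ℂ)*(c:ℂ)*(ν:ℂ)^3*((Real.sqrt 2:ℝ):ℂ)^2*Complex.I^2 + (-4)*(b:ℂ)*(c:ℂ)*(sh:ℂ)^2 + (4)*(b:ℂ)*(c:ℂ)*(sh:ℂ)^2*(ν:ℂ) + (-2)*(b:ℂ)*(c:ℂ)*(sh:ℂ)^2*(ν:ℂ)*((Real.sqrt 2:ℝ):ℂ)^2*Complex.I^2 + (4)*(b:ℂ)*(c:ℂ)*(sh:ℂ)^2*(ν:ℂ)^2 + (2)*(b:ℂ)*(c:ℂ)*(sh:ℂ)^2*(ν:ℂ)^2*((Real.sqrt 2:ℝ):ℂ)^2*Complex.I^2 + (-4)*(b:ℂ)*(c:ℂ)*(sh:ℂ)^2*(ν:ℂ)^3 + (3)*(b:ℂ)*(c:ℂ)*(sh:ℂ)^4*((Real.sqrt 2:ℝ):ℂ)^2*Complex.I^2 + (-3)*(b:ℂ)*(c:ℂ)*(sh:ℂ)^4*(ν:ℂ)*((Real.sqrt 2:ℝ):ℂ)^2*Complex.I^2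 + (-4)*(b:ℂ)*(c:ℂ)^3 + (12)*(b:ℂ)*(c:ℂ)^3*(ν:ℂ) + (2)*(b:ℂ)*(c:ℂ)^3*(ν:ℂ)*((Real.sqrt 2:ℝ):ℂ)^2*Complex.I^2 + (-12)*(b:ℂ)*(c:ℂ)^3*(ν:ℂ)^2 + (-2)*(b:ℂ)*(c:ℂ)^3*(ν:ℂ)^2*((Real.sqrt 2:ℝ):ℂ)^2*Complex.I^2 + (4)*(b:ℂ)*(c:ℂ)^3*(ν:ℂ)^3 + (2)*(b:ℂ)*(c:ℂ)^3*(sh:ℂ)^2*((Real.sqrt 2:ℝ):ℂ)^2*Complex.I^2 + (-2)*(b:ℂ)*(c:ℂ)^3*(sh:ℂ)^2*(ν:ℂ)*((Real.sqrt 2:ℝ):ℂ)^2*Complex.I^2 + (-1)*(b:ℂ)*(c:ℂ)^5*((Real.sqrt 2:ℝ):ℂ)^2*Complex.I^2 + (b:ℂ)*(c:ℂ)^5*(ν:ℂ)*((Real.sqrt 2:ℝ):ℂ)^2*Complex.I^2 + (-4)*(b:ℂ)^3*(c:ℂ)*(sh:ℂ)^2 + (8)*(b:ℂ)^3*(c:ℂ)*(sh:ℂ)^2*(ν:ℂ)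 + (-4)*(b:ℂ)^3*(c:ℂ)*(sh:ℂ)^2*(ν:ℂ)^2 + (2)*(a:ℂ)*(sh:ℂ)*(ν:ℂ)^2*((Real.sqrt 2:ℝ):ℂ)^2*Complex.I + (-2)*(a:ℂ)*(sh:ℂ)*(ν:ℂ)^3*((Real.sqrt 2:ℝ):ℂ)^2*Complex.I + (4)*(a:ℂ)*(sh:ℂ)^3*Complex.I + (4)*(a:ℂ)*(sh:ℂ)^3*(ν:ℂ)*Complex.I + (-4)*(a:ℂ)*(sh:ℂ)^3*(ν:ℂ)*((Real.sqrt 2:ℝ):ℂ)^2*Complex.I + (-4)*(a:ℂ)*(sh:ℂ)^3*(ν:ℂ)^2*Complex.I + (4)*(a:ℂ)*(sh:ℂ)^3*(ν:ℂ)^2*((Real.sqrt 2:ℝ):ℂ)^2*Complex.I + (-4)*(a:ℂ)*(sh:ℂ)^3*(ν:ℂ)^3*Complex.I + (2)*(a:ℂ)*(sh:ℂ)^5*((Real.sqrt 2:ℝ):ℂ)^2*Complex.I + (-2)*(a:ℂ)*(sh:ℂ)^5*(ν:ℂ)*((Real.sqrt 2:ℝ):ℂ)^2*Complex.I + (4)*(a:ℂ)*(c:ℂ)^2*(sh:ℂ)*Complex.I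 + (-4)*(a:ℂ)*(c:ℂ)^2*(sh:ℂ)*(ν:ℂ)*Complex.I + (-4)*(a:ℂ)*(c:ℂ)^2*(sh:ℂ)*(ν:ℂ)^2*Complex.I + (4)*(a:ℂ)*(c:ℂ)^2*(sh:ℂ)*(ν:ℂ)^3*Complex.I + (-2)*(a:ℂ)*(c:ℂ)^4*(sh:ℂ)*((Real.sqrt 2:ℝ):ℂ)^2*Complex.I + (2)*(a:ℂ)*(c:ℂ)^4*(sh:ℂ)*(ν:ℂ)*((Real.sqrt 2:ℝ):ℂ)^2*Complex.I + (4)*(a:ℂ)*(b:ℂ)^2*(sh:ℂ)^3*Complex.I + (-4)*(a:ℂ)*(b:ℂ)^2*(sh:ℂ)^3*(ν:ℂ)^2*Complex.I + (4)*(a:ℂ)*(b:ℂ)^2*(c:ℂ)^2*(sh:ℂ)*Complex.I + (-8)*(a:ℂ)*(b:ℂ)^2*(c:ℂ)^2*(sh:ℂ)*(ν:ℂ)*Complex.I + (4)*(a:ℂ)*(b:ℂ)^2*(c:ℂ)^2*(sh:ℂ)*(ν:ℂ)^2*Complex.I + (4)*(a:ℂ)*(b:ℂ)^4*(sh:ℂ)^3*Complex.I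 + (-4)*(a:ℂ)*(b:ℂ)^4*(sh:ℂ)^3*(ν:ℂ)*Complex.I) * hb2c
      + ((-4)*(b:ℂ)*(c:ℂ) + (b:ℂ)*(c:ℂ)*((Real.sqrt 2:ℝ):ℂ)^2 + (-1)*(b:ℂ)*(c:ℂ)*((Real.sqrt 2:ℝ):ℂ)^2*Complex.I^2 + (8)*(b:ℂ)*(c:ℂ)*(ν:ℂ) + (-2)*(b:ℂ)*(c:ℂ)*(ν:ℂ)*((Real.sqrt 2:ℝ):ℂ)^2 + (2)*(b:ℂ)*(c:ℂ)*(ν:ℂ)*((Real.sqrt 2:ℝ):ℂ)^2*Complex.I^2 + (-1)*(b:ℂ)*(c:ℂ)*(ν:ℂ)^2*((Real.sqrt 2:ℝ):ℂ)^2 + (b:ℂ)*(c:ℂ)*(ν:ℂ)^2*((Real.sqrt 2:ℝ):ℂ)^2*Complex.I^2 + (-8)*(b:ℂ)*(c:ℂ)*(ν:ℂ)^3 + (2)*(b:ℂ)*(c:ℂ)*(ν:ℂ)^3*((Real.sqrt 2:ℝ):ℂ)^2 + (-2)*(b:ℂ)*(c:ℂ)*(ν:ℂ)^3*((Real.sqrt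 2:ℝ):ℂ)^2*Complex.I^2 + (4)*(b:ℂ)*(c:ℂ)*(ν:ℂ)^4 + (3)*(b:ℂ)*(c:ℂ)*(sh:ℂ)^2*((Real.sqrt 2:ℝ):ℂ)^2 + (b:ℂ)*(c:ℂ)*(sh:ℂ)^2*((Real.sqrt 2:ℝ):ℂ)^2*Complex.I^2 + (-3)*(b:ℂ)*(c:ℂ)*(sh:ℂ)^2*(ν:ℂ)^2*((Real.sqrt 2:ℝ):ℂ)^2 + (-1)*(b:ℂ)*(c:ℂ)*(sh:ℂ)^2*(ν:ℂ)^2*((Real.sqrt 2:ℝ):ℂ)^2*Complex.I^2 + (b:ℂ)*(c:ℂ)^3*((Real.sqrt 2:ℝ):ℂ)^2 + (-1)*(b:ℂ)*(c:ℂ)^3*((Real.sqrt 2:ℝ):ℂ)^2*Complex.I^2 + (-1)*(b:ℂ)*(c:ℂ)^3*(ν:ℂ)^2*((Real.sqrt 2:ℝ):ℂ)^2 + (b:ℂ)*(c:ℂ)^3*(ν:ℂ)^2*((Real.sqrt 2:ℝ):ℂ)^2*Complex.I^2 + (4)*(a:ℂ)*(sh:ℂ)*Complex.I + (-2)*(a:ℂ)*(sh:ℂ)*((Real.sqrt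 2:ℝ):ℂ)^2*Complex.I + (-8)*(a:ℂ)*(sh:ℂ)*(ν:ℂ)^2*Complex.I + (2)*(a:ℂ)*(sh:ℂ)*(ν:ℂ)^2*((Real.sqrt 2:ℝ):ℂ)^2*Complex.I + (4)*(a:ℂ)*(sh:ℂ)*(ν:ℂ)^4*Complex.I + (-2)*(a:ℂ)*(sh:ℂ)^3*((Real.sqrt 2:ℝ):ℂ)^2*Complex.I + (2)*(a:ℂ)*(sh:ℂ)^3*(ν:ℂ)^2*((Real.sqrt 2:ℝ):ℂ)^2*Complex.I + (-2)*(a:ℂ)*(c:ℂ)^2*(sh:ℂ)*((Real.sqrt 2:ℝ):ℂ)^2*Complex.I + (2)*(a:ℂ)*(c:ℂ)^2*(sh:ℂ)*(ν:ℂ)^2*((Real.sqrt 2:ℝ):ℂ)^2*Complex.I) * hcsc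
      + ((b:ℂ)*(c:ℂ) + (-1)*(b:ℂ)*(c:ℂ)*Complex.I^2 + (-2)*(b:ℂ)*(c:ℂ)*(ν:ℂ) + (2)*(b:ℂ)*(c:ℂ)*(ν:ℂ)*Complex.I^2 + (2)*(b:ℂ)*(c:ℂ)*(ν:ℂ)^3 + (-2)*(b:ℂ)*(c:ℂ)*(ν:ℂ)^3*Complex.I^2 + (-1)*(b:ℂ)*(c:ℂ)*(ν:ℂ)^4 + (b:ℂ)*(c:ℂ)*(ν:ℂ)^4*Complex.I^2 + (4)*(b:ℂ)*(c:ℂ)*(sh:ℂ)^2 + (-4)*(b:ℂ)*(c:ℂ)*(sh:ℂ)^2*(ν:ℂ) + (-4)*(b:ℂ)*(c:ℂ)*(sh:ℂ)^2*(ν:ℂ)^2 + (4)*(b:ℂ)*(c:ℂ)*(sh:ℂ)^2*(ν:ℂ)^3 + (4)*(b:ℂ)*(c:ℂ)*(sh:ℂ)^4 + (4)*(b:ℂ)*(c:ℂ)*(sh:ℂ)^4*Complex.I^2 + (-4)*(b:ℂ)*(c:ℂ)*(sh:ℂ)^4*(ν:ℂ)^2 + (-4)*(b:ℂ)*(c:ℂ)*(sh:ℂ)^4*(ν:ℂ)^2*Complex.I^2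 + (-2)*(a:ℂ)*(sh:ℂ)*Complex.I + (4)*(a:ℂ)*(sh:ℂ)*(ν:ℂ)^2*Complex.I + (-2)*(a:ℂ)*(sh:ℂ)*(ν:ℂ)^4*Complex.I + (-4)*(a:ℂ)*(sh:ℂ)^3*Complex.I + (-4)*(a:ℂ)*(sh:ℂ)^3*(ν:ℂ)*Complex.I + (4)*(a:ℂ)*(sh:ℂ)^3*(ν:ℂ)^2*Complex.I + (4)*(a:ℂ)*(sh:ℂ)^3*(ν:ℂ)^3*Complex.I) * hr2c
      + ((-2)*(b:ℂ)*(c:ℂ) + (4)*(b:ℂ)*(c:ℂ)*(ν:ℂ) + (-4)*(b:ℂ)*(c:ℂ)*(ν:ℂ)^3 + (2)*(b:ℂ)*(c:ℂ)*(ν:ℂ)^4 + (8)*(b:ℂ)*(c:ℂ)*(sh:ℂ)^4 + (-8)*(b:ℂ)*(c:ℂ)*(sh:ℂ)^4*(ν:ℂ)^2) * hi2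
  simp only [map_div₀, map_mul, map_sub, Complex.conj_ofReal, Complex.conj_I]
  push_cast
  field_simp
  linear_combination ((1:ℂ)) * key
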